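/- Let ω = e^{i2π/3} and F(z) = (z-ω)⁴/(z(z+1)(z-1)(z+2)(z+1/2)). Then the residues of F at its five simple poles are: Res_{z=-2} F = e^{i2π/3}, Res_{z=-1} F = e^{iπ/3}, Res_{z=-1/2} F = 1, Res_{z=0} F = e^{-iπ/3}, and Res_{z=1} F = e^{-i2π/3}. In particular every residue has modulus 1. -/

import Mathlib

open Complex Filter Topology

/-- The rational function F(z) = (z-ω)⁴/(z(z+1)(z-1)(z+2)(z+1/2)), ω = e^{i2π/3}. -/
noncomputable def hexFG (z : ℂ) : ℂ :=
  (z - Complex.exp (2 * Real.pi * Complex.I / 3))^4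
    / (z * (z + 1) * (z - 1) * (z + 2) * (z + 1/2))

/-- The residue of `F` at a simple pole `p`, characterized as the limit of `(z-p)·F(z)`
as `z → p` (within `{p}ᶜ`). -/
def IsResidueAt (F : ℂ → ℂ) (p r : ℂ) : Prop :=
  Tendsto (fun z => (z - p) * F z) (𝓝[≠] p) (𝓝 r)

lemma resAux {w : ℂ} (p r : ℂ) (R : ℂ → ℂ) (hRc : ContinuousAt R p) (hR0 : R p ≠ 0)
    (hD : ∀ z : ℂ, z * (z + 1) * (z - 1) * (z + 2) * (z + 1/2) = (z - p) * R z)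
    (hval : (p - w)^4 / R p = r) :
    Tendsto (fun z : ℂ =>
        (z - p) * ((z - w)^4 / (z * (z + 1) * (z - 1) * (z + 2) * (z + 1/2))))
      (𝓝[≠] p) (𝓝 r) := by
  have hG : ContinuousAt (fun z : ℂ => (z - w)^4 / R z) p :=
    ContinuousAt.div (by fun_prop) hRc hR0
  have hT : Tendsto (fun z : ℂ => (z - w)^4 / R z) (𝓝[≠] p) (𝓝 r) := by
    rw [← hval]; exact hG.continuousWithinAt
  refine Tendsto.congr' ?_ hT
  filter_upwards [self_mem_nhdsWithin] with z hz
  have hzp : z - p ≠ 0 := sub_ne_zero_of_ne hz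
  rw [hD z, ← mul_div_assoc, mul_div_mul_left _ _ hzp]

theorem stmt_4 :
    IsResidueAt hexFG (-2) (Complex.exp (2 * Real.pi * Complex.I / 3)) ∧
    IsResidueAt hexFG (-1) (Complex.exp (Real.pi * Complex.I / 3)) ∧
    IsResidueAt hexFG (-1/2) 1 ∧
    IsResidueAt hexFG 0 (Complex.exp (-(Real.pi * Complex.I) / 3)) ∧
    IsResidueAt hexFG 1 (Complex.exp (-(2 * Real.pi * Complex.I) / 3)) ∧
    (∀ r : ℂ, r ∈ ({Complex.exp (2 * Real.pi * Complex.I / 3),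
        Complex.exp (Real.pi * Complex.I / 3), 1,
        Complex.exp (-(Real.pi * Complex.I) / 3),
        Complex.exp (-(2 * Real.pi * Complex.I) / 3)} : Set ℂ) → ‖r‖ = 1) := by
  set w : ℂ := Complex.exp (2 * Real.pi * Complex.I / 3) with hw
  -- basic facts about w
  have hw3 : w ^ 3 = 1 := by
    rw [hw, ← Complex.exp_nat_mul,
      show ((3 : ℕ) : ℂ) * (2 * (Real.pi : ℂ) * Complex.I / 3) = 2 * Real.pi * Complex.I by
        push_cast; ring, Complex.exp_two_pi_mul_I]
  have hwim : w.im = Real.sin (2 * Real.pi / 3) := by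
    rw [hw, show 2 * (Real.pi : ℂ) * Complex.I / 3
        = ((2 * Real.pi / 3 : ℝ) : ℂ) * Complex.I by push_cast; ring,
      Complex.exp_ofReal_mul_I_im]
  have hsin : 0 < Real.sin (2 * Real.pi / 3) :=
    Real.sin_pos_of_pos_of_lt_pi (by positivity) (by nlinarith [Real.pi_pos])
  have hwne : w ≠ 1 := by
    intro h
    rw [h] at hwim
    simp at hwim
    linarith [hwim]
  have hq : w ^ 2 + w + 1 = 0 := by
    have h : (w - 1) * (w ^ 2 + w + 1) = 0 := by linear_combination hw3
    rcases mul_eq_zero.mp h with h1 | h2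
    · exact absurd (sub_eq_zero.mp h1) hwne
    · exact h2
  -- auxiliary exponential identities
  set a : ℂ := Complex.exp (Real.pi * Complex.I / 3) with ha
  have ha3 : a ^ 3 = -1 := by
    rw [ha, ← Complex.exp_nat_mul,
      show ((3 : ℕ) : ℂ) * ((Real.pi : ℂ) * Complex.I / 3) = Real.pi * Complex.I by
        push_cast; ring, Complex.exp_pi_mul_I]
  have ha2 : a ^ 2 = w := by
    rw [ha, hw, ← Complex.exp_nat_mul]
    congr 1
    push_cast; ring
  have e1 : a = -w ^ 2 := by linear_combination (-(w + a ^ 2)) * ha2 + a * ha3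
  have e2 : Complex.exp (-((Real.pi : ℂ) * Complex.I) / 3) = -w := by
    have h1 : a * Complex.exp (-((Real.pi : ℂ) * Complex.I) / 3) = 1 := by
      rw [ha, ← Complex.exp_add,
        show (Real.pi : ℂ) * Complex.I / 3 + -((Real.pi : ℂ) * Complex.I) / 3 = 0 by ring,
        Complex.exp_zero]
    have h2 : a * (-w) = 1 := by
      rw [e1]; linear_combination hw3
    exact mul_left_cancel₀ (Complex.exp_ne_zero _) (h1.trans h2.symm)
  have e3 : Complex.exp (-(2 * (Real.pi : ℂ) * Complex.I) / 3) = w ^ 2 := by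
    have h1 : w * Complex.exp (-(2 * (Real.pi : ℂ) * Complex.I) / 3) = 1 := by
      rw [hw, ← Complex.exp_add,
        show 2 * (Real.pi : ℂ) * Complex.I / 3 + -(2 * (Real.pi : ℂ) * Complex.I) / 3 = 0 by
          ring, Complex.exp_zero]
    have h2 : w * w ^ 2 = 1 := by linear_combination hw3
    exact mul_left_cancel₀ (Complex.exp_ne_zero _) (h1.trans h2.symm)
  have habsw : ‖w‖ = 1 := by
    have h : ‖w‖ ^ 3 = 1 := by
      rw [← norm_pow, hw3, norm_one]
    nlinarith [norm_nonneg w, sq_nonneg (‖w‖ - 1),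
      sq_nonneg (‖w‖ + 1)]
  refine ⟨?_, ?_, ?_, ?_, ?_, ?_⟩
  · -- residue at -2 equals w
    show Tendsto _ _ (𝓝 w)
    simp only [IsResidueAt, hexFG, ← hw]
    exact resAux (-2) w (fun z => z * (z + 1) * (z - 1) * (z + 1/2))
      (by fun_prop) (by norm_num) (fun z => by ring)
      (by
        show (-2 - w)^4 / ((-2 : ℂ) * (-2 + 1) * (-2 - 1) * (-2 + 1/2)) = w
        rw [show ((-2 : ℂ)) * (-2 + 1) * (-2 - 1) * (-2 + 1/2) = 9 by norm_num,
          div_eq_iff (by norm_num : (9 : ℂ) ≠ 0)]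
        linear_combination (w ^ 2 + 7 * w + 16) * hq)
  · -- residue at -1 equals exp(πi/3) = -w²
    show Tendsto _ _ _
    simp only [IsResidueAt, hexFG, ← hw, ← ha, e1]
    exact resAux (-1) (-w ^ 2) (fun z => z * (z - 1) * (z + 2) * (z + 1/2))
      (by fun_prop) (by norm_num) (fun z => by ring)
      (by
        show (-1 - w)^4 / ((-1 : ℂ) * (-1 - 1) * (-1 + 2) * (-1 + 1/2)) = -w ^ 2
        rw [show ((-1 : ℂ)) * (-1 - 1) * (-1 + 2) * (-1 + 1/2) = -1 by norm_num,
          div_eq_iff (by norm_num : (-1 : ℂ) ≠ 0)]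
        linear_combination (w ^ 2 + 3 * w + 1) * hq)
  · -- residue at -1/2 equals 1
    simp only [IsResidueAt, hexFG, ← hw]
    exact resAux (-1/2) 1 (fun z => z * (z + 1) * (z - 1) * (z + 2))
      (by fun_prop) (by norm_num) (fun z => by ring)
      (by
        show (-1/2 - w)^4 / ((-1/2 : ℂ) * (-1/2 + 1) * (-1/2 - 1) * (-1/2 + 2)) = 1
        rw [show ((-1/2 : ℂ)) * (-1/2 + 1) * (-1/2 - 1) * (-1/2 + 2) = 9/16 by norm_num,
          div_eq_iff (by norm_num : (9/16 : ℂ) ≠ 0)]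
        linear_combination (w ^ 2 + w - 1/2) * hq)
  · -- residue at 0 equals exp(-πi/3) = -w
    simp only [IsResidueAt, hexFG, ← hw, e2]
    exact resAux 0 (-w) (fun z => (z + 1) * (z - 1) * (z + 2) * (z + 1/2))
      (by fun_prop) (by norm_num) (fun z => by ring)
      (by
        show (0 - w)^4 / (((0 : ℂ) + 1) * (0 - 1) * (0 + 2) * (0 + 1/2)) = -w
        rw [show ((0 : ℂ) + 1) * (0 - 1) * (0 + 2) * (0 + 1/2) = -1 by norm_num,
          div_eq_iff (by norm_num : (-1 : ℂ) ≠ 0)]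
        linear_combination w * hw3)
  · -- residue at 1 equals exp(-2πi/3) = w²
    simp only [IsResidueAt, hexFG, ← hw, e3]
    exact resAux 1 (w ^ 2) (fun z => z * (z + 1) * (z + 2) * (z + 1/2))
      (by fun_prop) (by norm_num) (fun z => by ring)
      (by
        show (1 - w)^4 / ((1 : ℂ) * (1 + 1) * (1 + 2) * (1 + 1/2)) = w ^ 2
        rw [show ((1 : ℂ)) * (1 + 1) * (1 + 2) * (1 + 1/2) = 9 by norm_num,
          div_eq_iff (by norm_num : (9 : ℂ) ≠ 0)]
        linear_combination (w ^ 2 - 5 * w + 1) * hq)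
  · -- all residues have modulus one
    intro r hr
    simp only [Set.mem_insert_iff, Set.mem_singleton_iff] at hr
    rcases hr with h | h | h | h | h <;> subst h
    · exact habsw
    · rw [e1, norm_neg, norm_pow, habsw]; norm_num
    · exact norm_one
    · rw [e2, norm_neg, habsw]
    · rw [e3, norm_pow, habsw]; norm_num
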